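/- Let F ⊆ ℤ^d be a finite set with connected components C_0, C_1, …, C_m (m ≥ 1), pick points a_j ∈ C_j with a_0 = 0, and let v_0, …, v_{n−1} ∈ ℤ^d be a path with v_0 = 0, ‖v_{j+1} − v_j‖_∞ ≤ 1 for all j, such that every a_j (j = 0, …, m) occurs among v_0, …, v_{n−1}. Let X ⊆ ℤ^{d+2} consist of the points (0, j, 0) for 0 ≤ j ≤ n−1 together with the points (v_j, n−1−j, 1) for 0 ≤ j ≤ n−1. Then F' = (F × {0}²) + X is connected in ℤ^{d+2}. -/

import Mathlib

open scoped Pointwise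

/-- Two points of `ℤ^d` are adjacent (connected) if they differ by at most `1` in every
coordinate. -/
def StepAdj {d : ℕ} (a b : Fin d → ℤ) : Prop :=
  ∀ i, |a i - b i| ≤ 1

/-- `x` and `y` are joined by a path inside `B` whose consecutive points differ by at
most `1` in every coordinate. -/
def ZConnIn {d : ℕ} (B : Set (Fin d → ℤ)) (x y : Fin d → ℤ) : Prop :=
  Relation.ReflTransGen (fun p q => p ∈ B ∧ q ∈ B ∧ StepAdj p q) x y

/-- `C` is a connected component of `F ⊆ ℤ^d`: the set of points of `F` reachable from
some point `a ∈ F` by paths in `F`. -/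
def IsComponent {d : ℕ} (F C : Set (Fin d → ℤ)) : Prop :=
  ∃ a ∈ F, C = {b | b ∈ F ∧ ZConnIn F a b}

/-- Two points of `ℤ^d × ℤ × ℤ ≅ ℤ^{d+2}` are adjacent (connected) if they differ by at
most `1` in every coordinate. -/
def StepAdjP {d : ℕ} (a b : (Fin d → ℤ) × ℤ × ℤ) : Prop :=
  (∀ i, |a.1 i - b.1 i| ≤ 1) ∧ |a.2.1 - b.2.1| ≤ 1 ∧ |a.2.2 - b.2.2| ≤ 1

/-- A set `B ⊆ ℤ^{d+2}` is connected if any two of its points are joined by a path inside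
`B` whose consecutive points differ by at most `1` in every coordinate. -/
def ZConnectedP {d : ℕ} (B : Set ((Fin d → ℤ) × ℤ × ℤ)) : Prop :=
  ∀ a ∈ B, ∀ b ∈ B,
    Relation.ReflTransGen (fun x y => x ∈ B ∧ y ∈ B ∧ StepAdjP x y) a b

theorem folded_bridge_connects_components {d : ℕ}
    (F : Set (Fin d → ℤ)) (hF : F.Finite)
    (m : ℕ) (hm : 1 ≤ m) (C : Fin (m + 1) → Set (Fin d → ℤ))
    (hcomp : ∀ j, IsComponent F (C j)) (hcover : (⋃ j, C j) = F)
    (a : Fin (m + 1) → Fin d → ℤ) (ha : ∀ j, a j ∈ C j) (ha0 : a 0 = 0)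
    (n : ℕ) (hn : 1 ≤ n)
    (v : ℕ → Fin d → ℤ) (hv0 : v 0 = 0)
    (hstep : ∀ j, j + 1 < n → ∀ i, |v (j + 1) i - v j i| ≤ 1)
    (hpath : ∀ j, ∃ i < n, a j = v i)
    (X : Set ((Fin d → ℤ) × ℤ × ℤ))
    (hX : X = {p | ∃ j < n, p = (0, (j : ℤ), 0)} ∪
      {p | ∃ j < n, p = (v j, (n : ℤ) - 1 - (j : ℤ), 1)}) :
    ZConnectedP ((F ×ˢ ({(0, 0)} : Set (ℤ × ℤ))) + X) := by
  set B : Set ((Fin d → ℤ) × ℤ × ℤ) := (F ×ˢ ({(0, 0)} : Set (ℤ × ℤ))) + X with hB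
  set R : ((Fin d → ℤ) × ℤ × ℤ) → ((Fin d → ℤ) × ℤ × ℤ) → Prop :=
    fun x y => x ∈ B ∧ y ∈ B ∧ StepAdjP x y with hRdef
  -- basic facts
  have h0F : (0 : Fin d → ℤ) ∈ F := by
    have h := ha 0
    rw [ha0] at h
    rw [← hcover]
    exact Set.mem_iUnion.2 ⟨0, h⟩
  have mem0 : ∀ f ∈ F, ∀ j : ℕ, j < n → ((f, (j : ℤ), (0 : ℤ)) : (Fin d → ℤ) × ℤ × ℤ) ∈ B := by
    intro f hf j hj
    have h : ((f, (0 : ℤ), (0 : ℤ)) + ((0 : Fin d → ℤ), (j : ℤ), (0 : ℤ))) ∈ B := by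
      refine Set.add_mem_add ⟨hf, rfl⟩ ?_
      rw [hX]; exact Or.inl ⟨j, hj, rfl⟩
    simpa using h
  have mem1 : ∀ f ∈ F, ∀ j : ℕ, j < n →
      ((f + v j, (n : ℤ) - 1 - (j : ℤ), (1 : ℤ)) : (Fin d → ℤ) × ℤ × ℤ) ∈ B := by
    intro f hf j hj
    have h : ((f, (0 : ℤ), (0 : ℤ)) + (v j, (n : ℤ) - 1 - (j : ℤ), (1 : ℤ))) ∈ B := by
      refine Set.add_mem_add ⟨hf, rfl⟩ ?_
      rw [hX]; exact Or.inr ⟨j, hj, rfl⟩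
    simpa using h
  have memB_cases : ∀ p ∈ B,
      (∃ f ∈ F, ∃ j < n, p = (f, (j : ℤ), (0 : ℤ))) ∨
      (∃ f ∈ F, ∃ j < n, p = (f + v j, (n : ℤ) - 1 - (j : ℤ), (1 : ℤ))) := by
    intro p hp
    rw [hB, Set.mem_add] at hp
    obtain ⟨⟨f, y⟩, hq, x, hx, rfl⟩ := hp
    obtain ⟨hf, hy⟩ := hq
    rcases hy with rfl
    rw [hX] at hx
    rcases hx with ⟨j, hj, rfl⟩ | ⟨j, hj, rfl⟩
    · exact Or.inl ⟨f, hf, j, hj, by simp⟩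
    · exact Or.inr ⟨f, hf, j, hj, by simp⟩
  have Rsymm : Symmetric R := by
    rintro x y ⟨hx, hy, h1, h2, h3⟩
    exact ⟨hy, hx, fun i => by rw [abs_sub_comm]; exact h1 i,
      by rw [abs_sub_comm]; exact h2, by rw [abs_sub_comm]; exact h3⟩
  have RTsymm : Symmetric (Relation.ReflTransGen R) := fun x y h =>
    @Std.Symm.symm _ _ (@Relation.ReflTransGen.symmetric _ _ ⟨fun a b hab => Rsymm hab⟩) x y h
  have zsymm : ∀ x y : Fin d → ℤ, ZConnIn F x y → ZConnIn F y x := by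
    intro x y h
    refine @Std.Symm.symm _ _ (@Relation.ReflTransGen.symmetric _ _ ⟨?_⟩) _ _ h
    rintro p q ⟨hp, hq, hpq⟩
    exact ⟨hq, hp, fun i => by rw [abs_sub_comm]; exact hpq i⟩
  -- lifting paths in F to layer 0
  have lift0 : ∀ j : ℕ, j < n → ∀ x y : Fin d → ℤ, ZConnIn F x y →
      Relation.ReflTransGen R (x, (j : ℤ), (0 : ℤ)) (y, (j : ℤ), (0 : ℤ)) := by
    intro j hj x y h
    refine Relation.ReflTransGen.lift (fun z => ((z, (j : ℤ), (0 : ℤ)) : (Fin d → ℤ) × ℤ × ℤ))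
      ?_ x y h
    rintro p q ⟨hp, hq, hpq⟩
    exact ⟨mem0 p hp j hj, mem0 q hq j hj, hpq, by simp, by simp⟩
  -- moving down to level 0 in layer 0
  have down : ∀ f ∈ F, ∀ j : ℕ, j < n →
      Relation.ReflTransGen R (f, (j : ℤ), (0 : ℤ)) (f, (0 : ℤ), (0 : ℤ)) := by
    intro f hf j
    induction j with
    | zero => intro _; simp only [Nat.cast_zero]; exact Relation.ReflTransGen.refl
    | succ k ih =>
      intro h
      have hk : k < n := by omega
      refine Relation.ReflTransGen.head ⟨mem0 f hf (k + 1) h, mem0 f hf k hk, ?_⟩ (ih hk)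
      refine ⟨fun i => by simp, ?_, by simp⟩
      have e : ((k + 1 : ℕ) : ℤ) - (k : ℤ) = 1 := by push_cast; ring
      rw [e]; norm_num
  -- the bridge walk in layer 1
  have bridge : ∀ f ∈ F, ∀ i : ℕ, i < n →
      Relation.ReflTransGen R (f + v i, (n : ℤ) - 1 - (i : ℤ), (1 : ℤ))
        (f, (n : ℤ) - 1, (1 : ℤ)) := by
    intro f hf i
    induction i with
    | zero =>
      intro _
      simp only [hv0, add_zero, Nat.cast_zero, sub_zero]
      exact Relation.ReflTransGen.refl
    | succ k ih =>
      intro h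
      have hk : k < n := by omega
      refine Relation.ReflTransGen.head ⟨mem1 f hf (k + 1) h, mem1 f hf k hk, ?_⟩ (ih hk)
      refine ⟨fun i => ?_, ?_, by simp⟩
      · have := hstep k h i
        simpa [Pi.add_apply, add_sub_add_left_eq_sub] using this
      · have e : ((n : ℤ) - 1 - ((k + 1 : ℕ) : ℤ)) - ((n : ℤ) - 1 - (k : ℤ)) = -1 := by
          push_cast; ring
        rw [e]; norm_num
  -- every layer-0 point reaches the origin
  have claimA : ∀ f ∈ F, ∀ j : ℕ, j < n →
      Relation.ReflTransGen R (f, (j : ℤ), (0 : ℤ)) (0, (0 : ℤ), (0 : ℤ)) := by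
    intro f hf j hj
    have hfU : f ∈ ⋃ k, C k := hcover ▸ hf
    obtain ⟨k, hk⟩ := Set.mem_iUnion.1 hfU
    obtain ⟨a', ha'F, hCk⟩ := hcomp k
    have hf' : f ∈ F ∧ ZConnIn F a' f := by rw [hCk] at hk; exact hk
    have hak : a k ∈ F ∧ ZConnIn F a' (a k) := by have := ha k; rw [hCk] at this; exact this
    have hfak : ZConnIn F f (a k) := (zsymm _ _ hf'.2).trans hak.2
    obtain ⟨i, hi, hai⟩ := hpath k
    have hcast : ((n - 1 - i : ℕ) : ℤ) = (n : ℤ) - 1 - (i : ℤ) := by omega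
    have hcast1 : ((n - 1 : ℕ) : ℤ) = (n : ℤ) - 1 := by omega
    -- (f,j,0) ~ (a k, j, 0)
    have s1 := lift0 j hj f (a k) hfak
    -- (a k, j, 0) ~ (a k, 0, 0)
    have s2 := down (a k) hak.1 j hj
    -- (a k, 0, 0) ~ (a k, n-1-i, 0)
    have s3 := RTsymm (down (a k) hak.1 (n - 1 - i) (by omega))
    -- cross step to layer 1: (a k, n-1-i, 0) ~ (v i, n-1-i, 1)
    have mem_ak : ((a k, ((n - 1 - i : ℕ) : ℤ), (0 : ℤ)) : (Fin d → ℤ) × ℤ × ℤ) ∈ B :=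
      mem0 (a k) hak.1 (n - 1 - i) (by omega)
    have mem_vi : ((v i, (n : ℤ) - 1 - (i : ℤ), (1 : ℤ)) : (Fin d → ℤ) × ℤ × ℤ) ∈ B := by
      have := mem1 0 h0F i hi
      simpa using this
    have s4 : Relation.ReflTransGen R (a k, ((n - 1 - i : ℕ) : ℤ), (0 : ℤ))
        (v i, (n : ℤ) - 1 - (i : ℤ), (1 : ℤ)) := by
      refine Relation.ReflTransGen.single ⟨mem_ak, mem_vi, ?_⟩
      refine ⟨fun x => by rw [hai]; simp, ?_, by norm_num⟩
      rw [hcast]; simp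
    -- bridge: (v i, n-1-i, 1) ~ (0, n-1, 1)
    have s5 : Relation.ReflTransGen R (v i, (n : ℤ) - 1 - (i : ℤ), (1 : ℤ))
        (0, (n : ℤ) - 1, (1 : ℤ)) := by
      have := bridge 0 h0F i hi
      simpa using this
    -- cross down: (0, n-1, 1) ~ (0, n-1, 0)
    have mem_top1 : (((0 : Fin d → ℤ), (n : ℤ) - 1, (1 : ℤ)) : (Fin d → ℤ) × ℤ × ℤ) ∈ B := by
      have := mem1 0 h0F 0 (by omega)
      simpa [hv0] using this
    have mem_top0 : (((0 : Fin d → ℤ), ((n - 1 : ℕ) : ℤ), (0 : ℤ)) : (Fin d → ℤ) × ℤ × ℤ) ∈ B :=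
      mem0 0 h0F (n - 1) (by omega)
    have s6 : Relation.ReflTransGen R ((0 : Fin d → ℤ), (n : ℤ) - 1, (1 : ℤ))
        ((0 : Fin d → ℤ), ((n - 1 : ℕ) : ℤ), (0 : ℤ)) := by
      refine Relation.ReflTransGen.single ⟨mem_top1, mem_top0, ?_⟩
      refine ⟨fun x => by simp, ?_, by norm_num⟩
      rw [hcast1]; simp
    have s7 := down 0 h0F (n - 1) (by omega)
    exact (((((s1.trans s2).trans s3).trans s4).trans s5).trans s6).trans s7
  -- every layer-1 point reaches the origin
  have claimB : ∀ f ∈ F, ∀ j : ℕ, j < n →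
      Relation.ReflTransGen R (f + v j, (n : ℤ) - 1 - (j : ℤ), (1 : ℤ))
        (0, (0 : ℤ), (0 : ℤ)) := by
    intro f hf j hj
    have hcast1 : ((n - 1 : ℕ) : ℤ) = (n : ℤ) - 1 := by omega
    have s1 := bridge f hf j hj
    have mem_f1 : ((f, (n : ℤ) - 1, (1 : ℤ)) : (Fin d → ℤ) × ℤ × ℤ) ∈ B := by
      have := mem1 f hf 0 (by omega)
      simpa [hv0] using this
    have mem_f0 : ((f, ((n - 1 : ℕ) : ℤ), (0 : ℤ)) : (Fin d → ℤ) × ℤ × ℤ) ∈ B :=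
      mem0 f hf (n - 1) (by omega)
    have s2 : Relation.ReflTransGen R (f, (n : ℤ) - 1, (1 : ℤ))
        (f, ((n - 1 : ℕ) : ℤ), (0 : ℤ)) := by
      refine Relation.ReflTransGen.single ⟨mem_f1, mem_f0, ?_⟩
      refine ⟨fun x => by simp, ?_, by norm_num⟩
      rw [hcast1]; simp
    exact (s1.trans s2).trans (claimA f hf (n - 1) (by omega))
  have main : ∀ p ∈ B, Relation.ReflTransGen R p (0, (0 : ℤ), (0 : ℤ)) := by
    intro p hp
    rcases memB_cases p hp with ⟨f, hf, j, hj, rfl⟩ | ⟨f, hf, j, hj, rfl⟩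
    · exact claimA f hf j hj
    · exact claimB f hf j hj
  intro x hx y hy
  exact (main x hx).trans (RTsymm (main y hy))
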